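/- Let Λ be a finitely aligned P-graph and T the filter representation on ℓ²(Λ̂). Then for all ν, ξ ∈ Λ: T_ν T_ν* T_ξ T_ξ* = Σ_{λ ∈ MCE(ν,ξ)} T_λ T_λ*. -/

import Mathlib

universe u

/-- A quasi-lattice ordered group in the sense of Nica: a (discrete) group `G` together
with a subsemigroup `P` containing the identity with `P ∩ P⁻¹ = {1}`, such that under the
partial order `p ≤ q ↔ p⁻¹ * q ∈ P`, any pair of elements of `G` with a common upper bound
in `P` has a least common upper bound in `P`. -/
structure QLOGroup (G : Type u) [Group G] where
  P : Set G
  one_mem : (1 : G) ∈ P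
  mul_mem : ∀ {p q : G}, p ∈ P → q ∈ P → p * q ∈ P
  eq_one_of_mem_inv_mem : ∀ p : G, p ∈ P → p⁻¹ ∈ P → p = 1
  lub_exists : ∀ p q : G, (∃ r ∈ P, p⁻¹ * r ∈ P ∧ q⁻¹ * r ∈ P) →
    ∃ r ∈ P, p⁻¹ * r ∈ P ∧ q⁻¹ * r ∈ P ∧
      ∀ s ∈ P, p⁻¹ * s ∈ P → q⁻¹ * s ∈ P → r⁻¹ * s ∈ P

namespace QLOGroup

variable {G : Type u} [Group G]

/-- The left-invariant partial order on `G` induced by `P`. -/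
def le (Q : QLOGroup G) (p q : G) : Prop := p⁻¹ * q ∈ Q.P

/-- `s` is the least common upper bound in `P` of `p` and `q` (i.e. `s = p ∨ q < ∞`). -/
def IsLub (Q : QLOGroup G) (p q s : G) : Prop :=
  s ∈ Q.P ∧ Q.le p s ∧ Q.le q s ∧ ∀ t ∈ Q.P, Q.le p t → Q.le q t → Q.le s t

/-- `s` is the least upper bound in `P` of the set `A` (i.e. `s = ∨A < ∞`). -/
def IsLubSet (Q : QLOGroup G) (A : Set G) (s : G) : Prop :=
  s ∈ Q.P ∧ (∀ a ∈ A, Q.le a s) ∧ ∀ t ∈ Q.P, (∀ a ∈ A, Q.le a t) → Q.le s t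

/-- `p` and `q` have a common upper bound in `P` (i.e. `p ∨ q < ∞`). -/
def HasLub (Q : QLOGroup G) (p q : G) : Prop := ∃ s, Q.IsLub p q s

/-- A subset `F` is `∨`-closed if whenever `p, q ∈ F` have `p ∨ q < ∞`, then `p ∨ q ∈ F`. -/
def VeeClosed (Q : QLOGroup G) (F : Set G) : Prop :=
  ∀ p ∈ F, ∀ q ∈ F, ∀ s, Q.IsLub p q s → s ∈ F

/-- `F̄ = {∨A : A ⊆ F, A ≠ ∅, ∨A ≠ ∞}`. -/
def veeClosure (Q : QLOGroup G) (F : Set G) : Set G :=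
  {s | ∃ A ⊆ F, A.Nonempty ∧ Q.IsLubSet A s}

end QLOGroup

/-- A `P`-graph for a quasi-lattice ordered group `(G,P)`: a countable category with a
degree functor `d` into `P` satisfying the unique factorisation property.  Composition is
written in the path order of Raeburn-Sims: `comp μ ν` is defined when `s(μ) = r(ν)` (with
`src = s = dom` and `tgt = r = cod`), and `comp` is a total function whose axioms are only
imposed on composable pairs. -/
structure PGraph {G : Type u} [Group G] (Q : QLOGroup G) where
  Obj : Type
  Mor : Type
  countable_mor : Countable Mor
  src : Mor → Obj
  tgt : Mor → Obj
  ident : Obj → Mor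
  comp : Mor → Mor → Mor
  src_ident : ∀ v, src (ident v) = v
  tgt_ident : ∀ v, tgt (ident v) = v
  src_comp : ∀ μ ν, src μ = tgt ν → src (comp μ ν) = src ν
  tgt_comp : ∀ μ ν, src μ = tgt ν → tgt (comp μ ν) = tgt μ
  id_comp : ∀ μ, comp (ident (tgt μ)) μ = μ
  comp_id : ∀ μ, comp μ (ident (src μ)) = μ
  comp_assoc : ∀ μ ν ρ, src μ = tgt ν → src ν = tgt ρ →
    comp (comp μ ν) ρ = comp μ (comp ν ρ)
  d : Mor → G
  d_mem : ∀ μ, d μ ∈ Q.P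
  d_ident : ∀ v, d (ident v) = 1
  d_comp : ∀ μ ν, src μ = tgt ν → d (comp μ ν) = d μ * d ν
  factorisation : ∀ (lam : Mor) (p q : G), p ∈ Q.P → q ∈ Q.P → d lam = p * q →
    ∃! mn : Mor × Mor, src mn.1 = tgt mn.2 ∧ lam = comp mn.1 mn.2 ∧ d mn.1 = p ∧ d mn.2 = q

namespace PGraph

variable {G : Type u} [Group G] {Q : QLOGroup G} (Λ : PGraph Q)

/-- The prefix order: `λ ⪯ μ` iff `μ = λμ'` for some `μ'`. -/
def PrefixLe (lam mu : Λ.Mor) : Prop :=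
  ∃ tail, Λ.src lam = Λ.tgt tail ∧ mu = Λ.comp lam tail

/-- The set of minimal common extensions of `μ` and `ν`. -/
def MCE (mu nu : Λ.Mor) : Set Λ.Mor :=
  {lam | Λ.PrefixLe mu lam ∧ Λ.PrefixLe nu lam ∧ Q.IsLub (Λ.d mu) (Λ.d nu) (Λ.d lam)}

/-- `Λ` is finitely aligned if all the sets `MCE(μ,ν)` are finite. -/
def FinitelyAligned : Prop := ∀ mu nu : Λ.Mor, (Λ.MCE mu nu).Finite

/-- A filter of `Λ`: a nonempty subset that is downward closed (F1) and upward
directed (F2) for the prefix order. -/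
def IsGraphFilter (U : Set Λ.Mor) : Prop :=
  U.Nonempty ∧ (∀ mu ∈ U, ∀ lam, Λ.PrefixLe lam mu → lam ∈ U) ∧
    (∀ mu ∈ U, ∀ nu ∈ U, ∃ lam ∈ U, Λ.PrefixLe mu lam ∧ Λ.PrefixLe nu lam)

/-- An ultrafilter of `Λ`: a filter maximal under inclusion. -/
def IsGraphUltrafilter (U : Set Λ.Mor) : Prop :=
  Λ.IsGraphFilter U ∧ ∀ V, Λ.IsGraphFilter V → U ⊆ V → U = V

/-- `λ·U = ⋃_{μ ∈ U} {α : α ⪯ λμ}`. -/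
def actFwd (lam : Λ.Mor) (U : Set Λ.Mor) : Set Λ.Mor :=
  {a | ∃ mu ∈ U, Λ.PrefixLe a (Λ.comp lam mu)}

/-- `λ*·V = {μ : λμ ∈ V}`. -/
def actBwd (lam : Λ.Mor) (V : Set Λ.Mor) : Set Λ.Mor :=
  {mu | Λ.src lam = Λ.tgt mu ∧ Λ.comp lam mu ∈ V}

/-- `(μ,ν)` is a balanced pair: `s(μ) = s(ν)` and `d(μ) = d(ν)`. -/
def Balanced (mu nu : Λ.Mor) : Prop := Λ.src mu = Λ.src nu ∧ Λ.d mu = Λ.d nu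

/-- The pairs `(α,β)` with `να = ξβ ∈ MCE(ν,ξ)`. -/
def MCEpairs (nu xi : Λ.Mor) : Set (Λ.Mor × Λ.Mor) :=
  {p | Λ.src nu = Λ.tgt p.1 ∧ Λ.src xi = Λ.tgt p.2 ∧
    Λ.comp nu p.1 = Λ.comp xi p.2 ∧ Λ.comp nu p.1 ∈ Λ.MCE nu xi}

end PGraph

/-- The set of filters `Λ̂` of `Λ`. -/
def PGraph.FilterPoint {G : Type u} [Group G] {Q : QLOGroup G} (Λ : PGraph Q) : Type :=
  {U : Set Λ.Mor // Λ.IsGraphFilter U}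

/-- The Hilbert space `ℓ²(Λ̂)`. -/
noncomputable abbrev PGraph.FilterSpace {G : Type u} [Group G] {Q : QLOGroup G} (Λ : PGraph Q) :=
  lp (fun _ : Λ.FilterPoint => ℂ) 2

/-- The standard orthonormal basis vector `e_U` of `ℓ²(Λ̂)`. -/
noncomputable def PGraph.basisVec {G : Type u} [Group G] {Q : QLOGroup G} (Λ : PGraph Q)
    (U : Λ.FilterPoint) : Λ.FilterSpace :=
  letI : DecidableEq Λ.FilterPoint := Classical.decEq _
  lp.single 2 U 1

namespace PGraphAux

open PGraph

variable {G : Type u} [Group G] {Q : QLOGroup G} (Λ : PGraph Q)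

theorem prefix_refl (lam : Λ.Mor) : Λ.PrefixLe lam lam :=
  ⟨Λ.ident (Λ.src lam), (Λ.tgt_ident _).symm, (Λ.comp_id lam).symm⟩

theorem prefix_comp {lam mu : Λ.Mor} (h : Λ.src lam = Λ.tgt mu) :
    Λ.PrefixLe lam (Λ.comp lam mu) := ⟨mu, h, rfl⟩

theorem prefix_trans {a b c : Λ.Mor} (hab : Λ.PrefixLe a b) (hbc : Λ.PrefixLe b c) :
    Λ.PrefixLe a c := by
  obtain ⟨s, hs, rfl⟩ := hab
  obtain ⟨t, ht, rfl⟩ := hbc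
  have hst : Λ.src s = Λ.tgt t := by rw [← Λ.src_comp a s hs]; exact ht
  refine ⟨Λ.comp s t, ?_, ?_⟩
  · rw [Λ.tgt_comp s t hst]; exact hs
  · rw [Λ.comp_assoc a s t hs hst]

theorem tgt_of_prefix {a b : Λ.Mor} (h : Λ.PrefixLe a b) : Λ.tgt b = Λ.tgt a := by
  obtain ⟨t, ht, rfl⟩ := h; exact Λ.tgt_comp a t ht

theorem d_le_of_prefix {a b : Λ.Mor} (h : Λ.PrefixLe a b) : Q.le (Λ.d a) (Λ.d b) := by
  obtain ⟨t, ht, rfl⟩ := h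
  show (Λ.d a)⁻¹ * Λ.d (Λ.comp a t) ∈ Q.P
  rw [Λ.d_comp a t ht, inv_mul_cancel_left]
  exact Λ.d_mem t

theorem cancel_left {lam a b : Λ.Mor} (ha : Λ.src lam = Λ.tgt a) (hb : Λ.src lam = Λ.tgt b)
    (h : Λ.comp lam a = Λ.comp lam b) : a = b := by
  have hd : Λ.d a = Λ.d b := by
    have := Λ.d_comp lam a ha
    rw [h, Λ.d_comp lam b hb] at this
    exact (mul_left_cancel this).symm
  obtain ⟨mn, _, huniq⟩ := Λ.factorisation (Λ.comp lam a) (Λ.d lam) (Λ.d a)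
    (Λ.d_mem lam) (Λ.d_mem a) (Λ.d_comp lam a ha)
  have h1 := huniq (lam, a) ⟨ha, rfl, rfl, rfl⟩
  have h2 := huniq (lam, b) ⟨hb, h, rfl, hd.symm⟩
  have := h1.trans h2.symm
  exact congrArg Prod.snd this

theorem eq_ident_of_d_eq_one {t : Λ.Mor} (h : Λ.d t = 1) : t = Λ.ident (Λ.tgt t) := by
  obtain ⟨mn, _, huniq⟩ := Λ.factorisation t 1 1 Q.one_mem Q.one_mem (by rw [h, one_mul])
  have h1 := huniq (Λ.ident (Λ.tgt t), t)
    ⟨by rw [Λ.src_ident], (Λ.id_comp t).symm, Λ.d_ident _, h⟩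
  have h2 := huniq (t, Λ.ident (Λ.src t))
    ⟨by rw [Λ.tgt_ident], (Λ.comp_id t).symm, h, Λ.d_ident _⟩
  have := h1.trans h2.symm
  exact (congrArg Prod.fst this).symm

theorem prefix_antisymm {a b : Λ.Mor} (hab : Λ.PrefixLe a b) (hba : Λ.PrefixLe b a) :
    a = b := by
  obtain ⟨s, hs, rfl⟩ := hab
  have hds : Λ.d s = 1 := by
    have h1 : Q.le (Λ.d a) (Λ.d (Λ.comp a s)) := d_le_of_prefix Λ ⟨s, hs, rfl⟩
    have h2 : Q.le (Λ.d (Λ.comp a s)) (Λ.d a) := d_le_of_prefix Λ hba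
    have hda : Λ.d (Λ.comp a s) = Λ.d a * Λ.d s := Λ.d_comp a s hs
    have hmem : Λ.d s ∈ Q.P := Λ.d_mem s
    have hinv : (Λ.d s)⁻¹ ∈ Q.P := by
      have : (Λ.d (Λ.comp a s))⁻¹ * Λ.d a ∈ Q.P := h2
      rwa [hda, mul_inv_rev, mul_assoc, inv_mul_cancel, mul_one] at this
    exact Q.eq_one_of_mem_inv_mem _ hmem hinv
  have : s = Λ.ident (Λ.tgt s) := eq_ident_of_d_eq_one Λ hds
  rw [this, ← hs, Λ.comp_id]

/-- If `ν ⪯ μ`, `λ ⪯ μ` and `d ν ≤ d λ`, then `ν ⪯ λ`. -/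
theorem prefix_of_prefix_le {nu lam mu : Λ.Mor} (hnu : Λ.PrefixLe nu mu)
    (hlam : Λ.PrefixLe lam mu) (hd : Q.le (Λ.d nu) (Λ.d lam)) : Λ.PrefixLe nu lam := by
  obtain ⟨t, ht, hmu⟩ := hlam
  obtain ⟨⟨a, b⟩, ⟨hab1, hab2, hab3, hab4⟩, _⟩ := Λ.factorisation lam (Λ.d nu)
    ((Λ.d nu)⁻¹ * Λ.d lam) (Λ.d_mem nu) hd (by rw [mul_inv_cancel_left])
  dsimp only at hab1 hab2 hab3 hab4
  obtain ⟨mn, _, huniq⟩ := Λ.factorisation mu (Λ.d nu) ((Λ.d nu)⁻¹ * Λ.d mu)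
    (Λ.d_mem nu) (d_le_of_prefix Λ hnu)
    (by rw [mul_inv_cancel_left])
  obtain ⟨s, hsrc, hmus⟩ := hnu
  have h1 := huniq (nu, s) ⟨hsrc, hmus, rfl, by
    rw [hmus, Λ.d_comp nu s hsrc, inv_mul_cancel_left]⟩
  have hsb : Λ.src b = Λ.tgt t := by
    rw [← Λ.src_comp a b hab1, ← hab2]; exact ht
  have h2 := huniq (a, Λ.comp b t) ⟨by rw [Λ.tgt_comp b t hsb]; exact hab1,
    by rw [← Λ.comp_assoc a b t hab1 hsb, ← hab2]; exact hmu,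
    hab3,
    by rw [Λ.d_comp b t hsb, hmu, Λ.d_comp lam t ht, hab4, mul_assoc]⟩
  have hna : nu = a := congrArg Prod.fst (h1.trans h2.symm)
  refine ⟨b, ?_, ?_⟩
  · rw [hna]; exact hab1
  · rw [hna, ← hab2]

theorem mem_of_prefix_mem {U : Set Λ.Mor} (hU : Λ.IsGraphFilter U) {a b : Λ.Mor}
    (hb : b ∈ U) (hab : Λ.PrefixLe a b) : a ∈ U := hU.2.1 b hb a hab

theorem tgt_eq_of_filter {U : Set Λ.Mor} (hU : Λ.IsGraphFilter U) {v : Λ.Obj}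
    (hv : Λ.ident v ∈ U) {mu : Λ.Mor} (hmu : mu ∈ U) : Λ.tgt mu = v := by
  obtain ⟨rho, _, hmr, hir⟩ := hU.2.2 mu hmu (Λ.ident v) hv
  have h1 : Λ.tgt rho = Λ.tgt mu := tgt_of_prefix Λ hmr
  have h2 : Λ.tgt rho = v := by
    rw [tgt_of_prefix Λ hir, Λ.tgt_ident]
  rw [← h1, h2]

theorem prefix_comp_mono {lam mu rho : Λ.Mor} (h : Λ.src lam = Λ.tgt mu)
    (hmr : Λ.PrefixLe mu rho) : Λ.PrefixLe (Λ.comp lam mu) (Λ.comp lam rho) := by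
  obtain ⟨t, ht, rfl⟩ := hmr
  refine ⟨t, by rw [Λ.src_comp lam mu h]; exact ht, ?_⟩
  rw [Λ.comp_assoc lam mu t h ht]

theorem self_mem_actFwd {lam : Λ.Mor} {U : Set Λ.Mor} (hv : Λ.ident (Λ.src lam) ∈ U) :
    lam ∈ Λ.actFwd lam U := by
  refine ⟨Λ.ident (Λ.src lam), hv, ?_⟩
  rw [Λ.comp_id]
  exact prefix_refl Λ lam

theorem actFwd_filter {lam : Λ.Mor} {U : Set Λ.Mor} (hU : Λ.IsGraphFilter U)
    (hv : Λ.ident (Λ.src lam) ∈ U) : Λ.IsGraphFilter (Λ.actFwd lam U) := by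
  refine ⟨⟨lam, self_mem_actFwd Λ hv⟩, ?_, ?_⟩
  · rintro a ⟨mu, hmu, hamu⟩ b hba
    exact ⟨mu, hmu, prefix_trans Λ hba hamu⟩
  · rintro a ⟨mu, hmu, hamu⟩ b ⟨mu', hmu', hbmu'⟩
    obtain ⟨rho, hrho, hmr, hmr'⟩ := hU.2.2 mu hmu mu' hmu'
    have hsl : Λ.src lam = Λ.tgt mu := (tgt_eq_of_filter Λ hU hv hmu).symm
    have hsl' : Λ.src lam = Λ.tgt mu' := (tgt_eq_of_filter Λ hU hv hmu').symm
    refine ⟨Λ.comp lam rho, ⟨rho, hrho, prefix_refl Λ _⟩, ?_, ?_⟩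
    · exact prefix_trans Λ hamu (prefix_comp_mono Λ hsl hmr)
    · exact prefix_trans Λ hbmu' (prefix_comp_mono Λ hsl' hmr')

theorem ident_mem_actBwd {lam : Λ.Mor} {U : Set Λ.Mor} (hlam : lam ∈ U) :
    Λ.ident (Λ.src lam) ∈ Λ.actBwd lam U := by
  refine ⟨(Λ.tgt_ident _).symm, ?_⟩
  rw [Λ.comp_id]; exact hlam

theorem actBwd_filter {lam : Λ.Mor} {U : Set Λ.Mor} (hU : Λ.IsGraphFilter U)
    (hlam : lam ∈ U) : Λ.IsGraphFilter (Λ.actBwd lam U) := by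
  refine ⟨⟨Λ.ident (Λ.src lam), ident_mem_actBwd Λ hlam⟩, ?_, ?_⟩
  · rintro mu ⟨hmu1, hmu2⟩ a ham
    have h1 : Λ.src lam = Λ.tgt a := hmu1.trans (tgt_of_prefix Λ ham)
    exact ⟨h1, mem_of_prefix_mem Λ hU hmu2 (prefix_comp_mono Λ h1 ham)⟩
  · rintro mu ⟨hmu1, hmu2⟩ nu ⟨hnu1, hnu2⟩
    obtain ⟨rho, hrho, hmr, hnr⟩ := hU.2.2 _ hmu2 _ hnu2
    have hlr : Λ.PrefixLe lam rho := prefix_trans Λ (prefix_comp Λ hmu1) hmr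
    obtain ⟨sig, hsig, rfl⟩ := hlr
    refine ⟨sig, ⟨hsig, hrho⟩, ?_, ?_⟩
    · obtain ⟨t, ht, hcomp⟩ := hmr
      refine ⟨t, by rw [← Λ.src_comp lam mu hmu1]; exact ht, ?_⟩
      refine cancel_left Λ hsig ?_ ?_
      · rw [Λ.tgt_comp mu t (by rw [← Λ.src_comp lam mu hmu1]; exact ht)]; exact hmu1
      · rw [← Λ.comp_assoc lam mu t hmu1 (by rw [← Λ.src_comp lam mu hmu1]; exact ht)]
        exact hcomp
    · obtain ⟨t, ht, hcomp⟩ := hnr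
      refine ⟨t, by rw [← Λ.src_comp lam nu hnu1]; exact ht, ?_⟩
      refine cancel_left Λ hsig ?_ ?_
      · rw [Λ.tgt_comp nu t (by rw [← Λ.src_comp lam nu hnu1]; exact ht)]; exact hnu1
      · rw [← Λ.comp_assoc lam nu t hnu1 (by rw [← Λ.src_comp lam nu hnu1]; exact ht)]
        exact hcomp

theorem actFwd_actBwd {lam : Λ.Mor} {U : Set Λ.Mor} (hU : Λ.IsGraphFilter U)
    (hlam : lam ∈ U) : Λ.actFwd lam (Λ.actBwd lam U) = U := by
  ext a
  constructor
  · rintro ⟨mu, ⟨hmu1, hmu2⟩, hamu⟩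
    exact mem_of_prefix_mem Λ hU hmu2 hamu
  · intro ha
    obtain ⟨rho, hrho, har, hlr⟩ := hU.2.2 a ha lam hlam
    obtain ⟨sig, hsig, rfl⟩ := hlr
    exact ⟨sig, ⟨hsig, hrho⟩, har⟩

theorem actBwd_actFwd {lam : Λ.Mor} {V : Set Λ.Mor} (hV : Λ.IsGraphFilter V)
    (hv : Λ.ident (Λ.src lam) ∈ V) : Λ.actBwd lam (Λ.actFwd lam V) = V := by
  ext mu
  constructor
  · rintro ⟨hmu1, rho, hrho, hcr⟩
    -- comp lam mu ⪯ comp lam rho, cancel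
    have hsr : Λ.src lam = Λ.tgt rho := (tgt_eq_of_filter Λ hV hv hrho).symm
    obtain ⟨t, ht, hcomp⟩ := hcr
    have hst : Λ.src mu = Λ.tgt t := by rw [← Λ.src_comp lam mu hmu1]; exact ht
    have : rho = Λ.comp mu t := by
      refine cancel_left Λ hsr ?_ ?_
      · rw [Λ.tgt_comp mu t hst]; exact hmu1
      · rw [← Λ.comp_assoc lam mu t hmu1 hst]; exact hcomp
    exact mem_of_prefix_mem Λ hV hrho (by rw [this]; exact ⟨t, hst, rfl⟩)
  · intro hmu
    have h1 : Λ.src lam = Λ.tgt mu := (tgt_eq_of_filter Λ hV hv hmu).symm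
    exact ⟨h1, mu, hmu, prefix_refl Λ _⟩

/-- Uniqueness of least upper bounds. -/
theorem lub_unique {p q s s' : G} (h : Q.IsLub p q s) (h' : Q.IsLub p q s') : s = s' := by
  have h1 : s⁻¹ * s' ∈ Q.P := h.2.2.2 s' h'.1 h'.2.1 h'.2.2.1
  have h2 : s'⁻¹ * s ∈ Q.P := h'.2.2.2 s h.1 h.2.1 h.2.2.1
  have : s⁻¹ * s' = 1 := Q.eq_one_of_mem_inv_mem _ h1 (by rwa [mul_inv_rev, inv_inv])
  rwa [inv_mul_eq_one] at this

/-- At most one element of `MCE(ν,ξ)` lies in a given filter. -/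
theorem MCE_mem_unique {nu xi : Λ.Mor} {U : Set Λ.Mor} (hU : Λ.IsGraphFilter U)
    {a b : Λ.Mor} (ha : a ∈ Λ.MCE nu xi) (hb : b ∈ Λ.MCE nu xi) (haU : a ∈ U)
    (hbU : b ∈ U) : a = b := by
  have hd : Λ.d a = Λ.d b := lub_unique ha.2.2 hb.2.2
  obtain ⟨rho, _, har, hbr⟩ := hU.2.2 a haU b hbU
  have h1 : Λ.PrefixLe a b := prefix_of_prefix_le Λ har hbr (by rw [hd]; exact d_le_of_prefix Λ (prefix_refl Λ b))
  have h2 : Λ.PrefixLe b a := prefix_of_prefix_le Λ hbr har (by rw [← hd]; exact d_le_of_prefix Λ (prefix_refl Λ a))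
  exact prefix_antisymm Λ h1 h2

/-- If `ν, ξ ∈ U` then some element of `MCE(ν,ξ)` lies in `U`. -/
theorem MCE_mem_exists {nu xi : Λ.Mor} {U : Set Λ.Mor} (hU : Λ.IsGraphFilter U)
    (hnu : nu ∈ U) (hxi : xi ∈ U) : ∃ a ∈ Λ.MCE nu xi, a ∈ U := by
  obtain ⟨rho, hrho, hnr, hxr⟩ := hU.2.2 nu hnu xi hxi
  obtain ⟨s, hsP, hns, hxs, hmin⟩ := Q.lub_exists (Λ.d nu) (Λ.d xi)
    ⟨Λ.d rho, Λ.d_mem rho, d_le_of_prefix Λ hnr, d_le_of_prefix Λ hxr⟩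
  have hlub : Q.IsLub (Λ.d nu) (Λ.d xi) s := ⟨hsP, hns, hxs, hmin⟩
  have hsle : s⁻¹ * Λ.d rho ∈ Q.P :=
    hmin (Λ.d rho) (Λ.d_mem rho) (d_le_of_prefix Λ hnr) (d_le_of_prefix Λ hxr)
  obtain ⟨⟨a, b⟩, ⟨hab1, hab2, hab3, hab4⟩, _⟩ := Λ.factorisation rho s (s⁻¹ * Λ.d rho)
    hsP hsle (by rw [mul_inv_cancel_left])
  dsimp only at hab1 hab2 hab3 hab4
  have halam : Λ.PrefixLe a rho := by rw [hab2]; exact prefix_comp Λ hab1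
  have haU : a ∈ U := mem_of_prefix_mem Λ hU hrho halam
  have hna : Λ.PrefixLe nu a := prefix_of_prefix_le Λ hnr halam (by rw [hab3]; exact hns)
  have hxa : Λ.PrefixLe xi a := prefix_of_prefix_le Λ hxr halam (by rw [hab3]; exact hxs)
  exact ⟨a, ⟨hna, hxa, by rw [hab3]; exact hlub⟩, haU⟩

local notation "⟪" x ", " y "⟫" => @inner ℂ _ _ x y

open scoped Classical in
theorem basisVec_apply (U V : Λ.FilterPoint) :
    (Λ.basisVec U : ∀ _ : Λ.FilterPoint, ℂ) V = if V = U then 1 else 0 := by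
  rw [PGraph.basisVec]
  by_cases h : V = U
  · subst h; simp [lp.single_apply_self]
  · simp [lp.single_apply_ne 2 U _ h, h]

theorem inner_basisVec_left (U : Λ.FilterPoint) (f : Λ.FilterSpace) :
    ⟪Λ.basisVec U, f⟫ = f U := by
  classical
  rw [PGraph.basisVec, lp.inner_single_left]
  simp

theorem dense_span_basisVec :
    Dense (Submodule.span ℂ (Set.range Λ.basisVec) : Set Λ.FilterSpace) := by
  classical
  let b : HilbertBasis Λ.FilterPoint ℂ Λ.FilterSpace :=
    HilbertBasis.ofRepr (LinearIsometryEquiv.refl ℂ Λ.FilterSpace)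
  have hcoe : ⇑b = Λ.basisVec := by
    funext U
    show b.repr.symm (lp.single 2 U 1) = Λ.basisVec U
    rw [PGraph.basisVec]
    rfl
  rw [← hcoe]
  exact Submodule.dense_iff_topologicalClosure_eq_top.mpr b.dense_span

theorem clm_ext {A B : Λ.FilterSpace →L[ℂ] Λ.FilterSpace}
    (h : ∀ U, A (Λ.basisVec U) = B (Λ.basisVec U)) : A = B :=
  ContinuousLinearMap.ext_on (dense_span_basisVec Λ) (by rintro x ⟨U, rfl⟩; exact h U)

section Ops

variable (T : Λ.Mor → (Λ.FilterSpace →L[ℂ] Λ.FilterSpace))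
variable (hT : ∀ lam : Λ.Mor,
      (∀ U : Λ.FilterPoint, Λ.ident (Λ.src lam) ∈ U.val →
        ∀ h : Λ.IsGraphFilter (Λ.actFwd lam U.val),
          T lam (Λ.basisVec U) = Λ.basisVec ⟨Λ.actFwd lam U.val, h⟩) ∧
      (∀ U : Λ.FilterPoint, Λ.ident (Λ.src lam) ∉ U.val → T lam (Λ.basisVec U) = 0))

include hT

theorem T_apply_mem {lam : Λ.Mor} {U : Λ.FilterPoint} (h : Λ.ident (Λ.src lam) ∈ U.val) :
    T lam (Λ.basisVec U) =
      Λ.basisVec ⟨Λ.actFwd lam U.val, actFwd_filter Λ U.2 h⟩ :=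
  (hT lam).1 U h _

theorem T_apply_not_mem {lam : Λ.Mor} {U : Λ.FilterPoint}
    (h : Λ.ident (Λ.src lam) ∉ U.val) : T lam (Λ.basisVec U) = 0 :=
  (hT lam).2 U h

theorem adjoint_T_apply_mem {lam : Λ.Mor} {U : Λ.FilterPoint} (hmem : lam ∈ U.val) :
    ContinuousLinearMap.adjoint (T lam) (Λ.basisVec U) =
      Λ.basisVec ⟨Λ.actBwd lam U.val, actBwd_filter Λ U.2 hmem⟩ := by
  refine lp.ext (funext fun W => ?_)
  have key : (ContinuousLinearMap.adjoint (T lam) (Λ.basisVec U) : ∀ _, ℂ) W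
      = ⟪T lam (Λ.basisVec W), Λ.basisVec U⟫ := by
    rw [← inner_basisVec_left Λ, ContinuousLinearMap.adjoint_inner_right]
  rw [key]
  by_cases hW : Λ.ident (Λ.src lam) ∈ W.val
  · rw [T_apply_mem Λ T hT hW]
    erw [inner_basisVec_left Λ]
    erw [basisVec_apply Λ, basisVec_apply Λ]
    by_cases h2 : W = (⟨Λ.actBwd lam U.val, actBwd_filter Λ U.2 hmem⟩ : Λ.FilterPoint)
    · rw [if_pos h2, if_pos]
      refine Subtype.ext ?_
      show Λ.actFwd lam W.val = U.val
      rw [show W.val = Λ.actBwd lam U.val from congrArg Subtype.val h2]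
      exact actFwd_actBwd Λ U.2 hmem
    · rw [if_neg h2, if_neg]
      intro h3
      apply h2
      refine Subtype.ext ?_
      show W.val = Λ.actBwd lam U.val
      rw [← congrArg Subtype.val h3]
      show W.val = Λ.actBwd lam (Λ.actFwd lam W.val)
      rw [actBwd_actFwd Λ W.2 hW]
  · rw [T_apply_not_mem Λ T hT hW, inner_zero_left]
    erw [basisVec_apply Λ, if_neg]
    intro h2
    apply hW
    have : W.val = Λ.actBwd lam U.val := congrArg Subtype.val h2
    rw [this]
    exact ident_mem_actBwd Λ hmem

theorem adjoint_T_apply_not_mem {lam : Λ.Mor} {U : Λ.FilterPoint} (hmem : lam ∉ U.val) :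
    ContinuousLinearMap.adjoint (T lam) (Λ.basisVec U) = 0 := by
  refine lp.ext (funext fun W => ?_)
  have key : (ContinuousLinearMap.adjoint (T lam) (Λ.basisVec U) : ∀ _, ℂ) W
      = ⟪T lam (Λ.basisVec W), Λ.basisVec U⟫ := by
    rw [← inner_basisVec_left Λ, ContinuousLinearMap.adjoint_inner_right]
  rw [key]
  by_cases hW : Λ.ident (Λ.src lam) ∈ W.val
  · rw [T_apply_mem Λ T hT hW]
    erw [inner_basisVec_left Λ, basisVec_apply Λ]
    rw [if_neg, lp.coeFn_zero, Pi.zero_apply]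
    intro h2
    apply hmem
    rw [← congrArg Subtype.val h2]
    exact self_mem_actFwd Λ hW
  · rw [T_apply_not_mem Λ T hT hW, inner_zero_left, lp.coeFn_zero, Pi.zero_apply]

open scoped Classical in
theorem proj_apply (lam : Λ.Mor) (U : Λ.FilterPoint) :
    (T lam ∘L ContinuousLinearMap.adjoint (T lam)) (Λ.basisVec U) =
      if lam ∈ U.val then Λ.basisVec U else 0 := by
  rw [ContinuousLinearMap.comp_apply]
  by_cases hmem : lam ∈ U.val
  · rw [adjoint_T_apply_mem Λ T hT hmem, if_pos hmem]
    erw [T_apply_mem Λ T hT (ident_mem_actBwd Λ hmem)]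
    congr 1
    exact Subtype.ext (actFwd_actBwd Λ U.2 hmem)
  · rw [adjoint_T_apply_not_mem Λ T hT hmem, map_zero, if_neg hmem]

end Ops

end PGraphAux
/-- For the filter representation `T` on `ℓ²(Λ̂)` and all `ν, ξ ∈ Λ`:
`T_ν T_ν* T_ξ T_ξ* = ∑_{λ ∈ MCE(ν,ξ)} T_λ T_λ*`. -/
theorem stmt11 {G : Type u} [Group G] {Q : QLOGroup G} (Λ : PGraph Q)
    (hFA : Λ.FinitelyAligned)
    (T : Λ.Mor → (Λ.FilterSpace →L[ℂ] Λ.FilterSpace))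
    (hT : ∀ lam : Λ.Mor,
      (∀ U : Λ.FilterPoint, Λ.ident (Λ.src lam) ∈ U.val →
        ∀ h : Λ.IsGraphFilter (Λ.actFwd lam U.val),
          T lam (Λ.basisVec U) = Λ.basisVec ⟨Λ.actFwd lam U.val, h⟩) ∧
      (∀ U : Λ.FilterPoint, Λ.ident (Λ.src lam) ∉ U.val → T lam (Λ.basisVec U) = 0)) :
    ∀ nu xi : Λ.Mor,
      (T nu ∘L ContinuousLinearMap.adjoint (T nu)) ∘L
          (T xi ∘L ContinuousLinearMap.adjoint (T xi)) =
        ∑ᶠ lam ∈ Λ.MCE nu xi, T lam ∘L ContinuousLinearMap.adjoint (T lam) := by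
  classical
  intro nu xi
  refine PGraphAux.clm_ext Λ fun U => ?_
  rw [finsum_mem_eq_finite_toFinset_sum _ (hFA nu xi), ContinuousLinearMap.sum_apply,
    ContinuousLinearMap.comp_apply, PGraphAux.proj_apply Λ T hT xi U,
    Finset.sum_congr rfl (fun b _ => PGraphAux.proj_apply Λ T hT b U)]
  by_cases hxi : xi ∈ U.val
  · rw [if_pos hxi, PGraphAux.proj_apply Λ T hT nu U]
    by_cases hnu : nu ∈ U.val
    · rw [if_pos hnu]
      obtain ⟨l0, hl0, hl0U⟩ := PGraphAux.MCE_mem_exists Λ U.2 hnu hxi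
      refine ((Finset.sum_eq_single_of_mem l0 ((hFA nu xi).mem_toFinset.mpr hl0)
        (fun b hb hne => if_neg fun hbU => hne
          (PGraphAux.MCE_mem_unique Λ U.2 ((hFA nu xi).mem_toFinset.mp hb) hl0 hbU
            hl0U))).trans (if_pos hl0U)).symm
    · rw [if_neg hnu]
      symm
      refine Finset.sum_eq_zero fun b hb => if_neg fun hbU => ?_
      exact hnu (PGraphAux.mem_of_prefix_mem Λ U.2 hbU ((hFA nu xi).mem_toFinset.mp hb).1)
  · rw [if_neg hxi, map_zero]
    symm
    refine Finset.sum_eq_zero fun b hb => if_neg fun hbU => ?_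
    exact hxi (PGraphAux.mem_of_prefix_mem Λ U.2 hbU ((hFA nu xi).mem_toFinset.mp hb).2.1)
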